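/- Let f be a continuous strictly positive probability density on ℝ with CDF F, and let c₂(c₁) = F⁻¹(F(c₁) + 1 − α). For c₁ < c₁' in the domain {F(c₁) < α} with c₁' < c₂(c₁): ∫_{c₂(c₁)}^{c₂(c₁')} t f(t) dt − ∫_{c₁}^{c₁'} t f(t) dt > c₂(c₁)·∫_{c₂(c₁)}^{c₂(c₁')} f(t)dt − c₁'·∫_{c₁}^{c₁'} f(t)dt = (c₂(c₁) − c₁')·∫_{c₁}^{c₁'} f(t)dt > 0. -/

import Mathlib

open MeasureTheory

theorem stmt_18 (f : ℝ → ℝ) (hf_cont : Continuous f) (hf_pos : ∀ t, 0 < f t)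
    (hf_density : (∫ t, f t) = 1)
    (hf_moment : Integrable (fun t => t * f t))
    (F Finv : ℝ → ℝ) (hF : ∀ x, F x = ∫ t in Set.Iic x, f t)
    (hFinv_left : ∀ x, Finv (F x) = x)
    (hFinv_right : ∀ y, 0 < y → y < 1 → F (Finv y) = y)
    (α : ℝ) (hα0 : 0 < α) (hα : α < 1 / 2)
    (c2 : ℝ → ℝ) (hc2 : ∀ c1, c2 c1 = Finv (F c1 + 1 - α))
    (c1 c1' : ℝ) (hlt : c1 < c1') (hdom : F c1 < α) (hdom' : F c1' < α)
    (hmid : c1' < c2 c1) :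
    ((∫ t in (c2 c1)..(c2 c1'), t * f t) - ∫ t in c1..c1', t * f t >
        c2 c1 * (∫ t in (c2 c1)..(c2 c1'), f t) - c1' * ∫ t in c1..c1', f t) ∧
    (c2 c1 * (∫ t in (c2 c1)..(c2 c1'), f t) - c1' * (∫ t in c1..c1', f t)
        = (c2 c1 - c1') * ∫ t in c1..c1', f t) ∧
    0 < (c2 c1 - c1') * ∫ t in c1..c1', f t := by
  have hf_int : Integrable f := by
    by_contra h
    rw [integral_undef h] at hf_density
    norm_num at hf_density
  have hFsub : ∀ a b : ℝ, F b - F a = ∫ t in a..b, f t := fun a b => by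
    rw [hF, hF]
    exact intervalIntegral.integral_Iic_sub_Iic hf_int.integrableOn hf_int.integrableOn
  have hFmono : StrictMono F := fun a b hab => by
    have h := intervalIntegral.intervalIntegral_pos_of_pos
      hf_int.intervalIntegrable hf_pos hab
    rw [← hFsub] at h; linarith
  have hFnn : ∀ x, 0 ≤ F x := fun x => by
    rw [hF]; exact setIntegral_nonneg measurableSet_Iic fun t _ => (hf_pos t).le
  have h1 : F (c2 c1) = F c1 + 1 - α := by
    rw [hc2]; exact hFinv_right _ (by linarith [hFnn c1]) (by linarith)
  have h1' : F (c2 c1') = F c1' + 1 - α := by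
    rw [hc2]; exact hFinv_right _ (by linarith [hFnn c1']) (by linarith)
  have hc2lt : c2 c1 < c2 c1' := by
    by_contra h
    exact absurd (hFmono.monotone (not_lt.1 h)) (by rw [h1, h1']; push_neg
                                                    linarith [hFmono hlt])
  have hIeq : (∫ t in (c2 c1)..(c2 c1'), f t) = ∫ t in c1..c1', f t := by
    rw [← hFsub, ← hFsub, h1, h1']; ring
  have hIpos : 0 < ∫ t in c1..c1', f t :=
    intervalIntegral.intervalIntegral_pos_of_pos hf_int.intervalIntegrable hf_pos hlt
  have hA : c2 c1 * (∫ t in (c2 c1)..(c2 c1'), f t) < ∫ t in (c2 c1)..(c2 c1'), t * f t := by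
    have := intervalIntegral.integral_lt_integral_of_continuousOn_of_le_of_exists_lt
      hc2lt ((continuous_const.mul hf_cont).continuousOn)
      ((continuous_id.mul hf_cont).continuousOn)
      (fun x hx => mul_le_mul_of_nonneg_right hx.1.le (hf_pos x).le)
      ⟨c2 c1', ⟨hc2lt.le, le_rfl⟩, mul_lt_mul_of_pos_right hc2lt (hf_pos _)⟩
    simp only [Pi.mul_apply, id] at this
    rwa [intervalIntegral.integral_const_mul] at this
  have hB : (∫ t in c1..c1', t * f t) < c1' * ∫ t in c1..c1', f t := by
    have := intervalIntegral.integral_lt_integral_of_continuousOn_of_le_of_exists_lt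
      hlt ((continuous_id.mul hf_cont).continuousOn)
      ((continuous_const.mul hf_cont).continuousOn)
      (fun x hx => mul_le_mul_of_nonneg_right hx.2 (hf_pos x).le)
      ⟨c1, ⟨le_rfl, hlt.le⟩, mul_lt_mul_of_pos_right hlt (hf_pos _)⟩
    simp only [Pi.mul_apply, id] at this
    rwa [intervalIntegral.integral_const_mul] at this
  refine ⟨by linarith, by rw [hIeq]; ring, mul_pos (by linarith) hIpos⟩
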